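/- arXiv:2107.12116 — 5 statements merged into one kernel-verified Lean document; each statement's English description precedes it below -/
import Mathlib

section
/- Let $S = K[X_1,\ldots,X_n]$ over a perfect field $K$ of characteristic $p>0$, and let $\mathrm{Tr} \in \mathrm{Hom}_S(F_*S, S)$ be the projection onto the basis element $X_1^{p-1}\cdots X_n^{p-1}$ (the dual basis element corresponding to that monomial). Then the map $\Phi: F_*S \to \mathrm{Hom}_S(F_*S,S)$ sending $f$ to the map $g \mapsto \mathrm{Tr}(fg)$ is an isomorphism of $F_*S$-modules. -/
open MvPolynomial
open scoped Classical

/-- The trace map `Tr : F_*S → S`, the projection onto the basis element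
`X_1^{p-1} ⋯ X_n^{p-1}` of the monomial basis of `F_*S` over `S`: a monomial `a·X^u`
is sent to `a^{1/p}·X^{(u+1)/p - 1}` if all `u_j ≡ -1 (mod p)`, and to `0` otherwise. -/
noncomputable def Tr (n p : ℕ) [Fact p.Prime] (K : Type) [Field K] [CharP K p]
    [PerfectRing K p] (g : MvPolynomial (Fin n) K) : MvPolynomial (Fin n) K :=
  ∑ u ∈ g.support,
    if (∀ j, u j % p = p - 1) then
      monomial
        (u.mapRange (fun a => (a + 1) / p - 1)
          (by simp [Nat.div_eq_of_lt (Fact.out : p.Prime).one_lt]))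
        ((frobeniusEquiv K p).symm (coeff u g))
    else 0

section
variable (n p : ℕ) [Fact p.Prime] (K : Type) [Field K] [CharP K p] [PerfectRing K p]

lemma arith (cj uj : ℕ) (h : uj % p = p - 1) :
    (p * cj + uj + 1) / p - 1 = cj + ((uj + 1) / p - 1) := by
  have hp : 0 < p := (Fact.out : p.Prime).pos
  obtain ⟨k, hk⟩ : ∃ k, uj = p * k + (p - 1) :=
    ⟨uj / p, by conv_lhs => rw [← Nat.div_add_mod uj p]; rw [h]⟩
  subst hk
  have h1 : p * cj + (p * k + (p - 1)) + 1 = p * (cj + k + 1) := by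
    rw [Nat.mul_add, Nat.mul_add, Nat.mul_one]; omega
  have h2 : p * k + (p - 1) + 1 = p * (k + 1) := by
    rw [Nat.mul_add, Nat.mul_one]; omega
  rw [h1, h2, Nat.mul_div_cancel_left _ hp, Nat.mul_div_cancel_left _ hp]
  omega

noncomputable def TrF (u : Fin n →₀ ℕ) (a : K) : MvPolynomial (Fin n) K :=
    if (∀ j, u j % p = p - 1) then
      monomial (u.mapRange (fun a => (a + 1) / p - 1)
          (by simp [Nat.div_eq_of_lt (Fact.out : p.Prime).one_lt]))
        ((frobeniusEquiv K p).symm a)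
    else 0

lemma Tr_eq_sum (g : MvPolynomial (Fin n) K) : Tr n p K g = (AddMonoidAlgebra.coeff g).sum (TrF n p K) := rfl

lemma TrF_zero (u : Fin n →₀ ℕ) : TrF n p K u 0 = 0 := by
  unfold TrF; split_ifs <;> simp

lemma TrF_add (u : Fin n →₀ ℕ) (a b : K) :
    TrF n p K u (a + b) = TrF n p K u a + TrF n p K u b := by
  unfold TrF; split_ifs <;> simp [map_add]

lemma Tr_add (g h : MvPolynomial (Fin n) K) :
    Tr n p K (g + h) = Tr n p K g + Tr n p K h := by
  simp only [Tr_eq_sum]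
  rw [AddMonoidAlgebra.coeff_add]
  exact Finsupp.sum_add_index' (TrF_zero n p K) (TrF_add n p K)

lemma Tr_monomial (u : Fin n →₀ ℕ) (a : K) :
    Tr n p K (monomial u a) = TrF n p K u a := by
  rw [Tr_eq_sum]
  rcases eq_or_ne a 0 with rfl | ha
  · simp [TrF_zero]
  · rw [show AddMonoidAlgebra.coeff (monomial u a : MvPolynomial (Fin n) K) = Finsupp.single u a from rfl]
    exact Finsupp.sum_single_index (TrF_zero n p K u)

lemma frob_symm_pow_mul (b a : K) :
    (frobeniusEquiv K p).symm (b ^ p * a) = b * (frobeniusEquiv K p).symm a := by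
  rw [map_mul]
  congr 1
  have hb : frobeniusEquiv K p b = b ^ p := by rw [frobeniusEquiv_apply, frobenius_def]
  rw [← hb, RingEquiv.symm_apply_apply]

lemma Tr_pow_mul_mono (c u : Fin n →₀ ℕ) (b a : K) :
    Tr n p K ((monomial c b) ^ p * monomial u a)
      = monomial c b * Tr n p K (monomial u a) := by
  rw [monomial_pow, monomial_mul, Tr_monomial, Tr_monomial]
  unfold TrF
  have hc : (∀ j, (p • c + u) j % p = p - 1) ↔ (∀ j, u j % p = p - 1) := by
    apply forall_congr'
    intro j
    simp only [Finsupp.add_apply, Finsupp.smul_apply, smul_eq_mul, Nat.mul_add_mod]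
  split_ifs with h1 h2 h2
  · rw [frob_symm_pow_mul, monomial_mul]
    have he : Finsupp.mapRange (fun a => (a + 1) / p - 1)
        (by simp [Nat.div_eq_of_lt (Fact.out : p.Prime).one_lt]) (p • c + u)
        = c + Finsupp.mapRange (fun a => (a + 1) / p - 1)
        (by simp [Nat.div_eq_of_lt (Fact.out : p.Prime).one_lt]) u := by
      apply Finsupp.ext; intro j
      simp only [Finsupp.mapRange_apply, Finsupp.add_apply, Finsupp.smul_apply, smul_eq_mul]
      exact arith p (c j) (u j) (h2 j)
    rw [he]
  · exact absurd (hc.mp h1) h2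
  · exact absurd (hc.mpr h2) h1
  · rw [mul_zero]

lemma Tr_pow_mul (r g : MvPolynomial (Fin n) K) :
    Tr n p K (r ^ p * g) = r * Tr n p K g := by
  induction g using MvPolynomial.induction_on' with
  | add g h ihg ihh => rw [mul_add, Tr_add, Tr_add, mul_add, ihg, ihh]
  | monomial u a =>
    induction r using MvPolynomial.induction_on' with
    | add r s ihr ihs =>
      rw [add_pow_char, add_mul, Tr_add, ihr, ihs, add_mul]
    | monomial c b => exact Tr_pow_mul_mono n p K c u b a

set_option linter.unusedSectionVars false

lemma Tr_zero : Tr n p K 0 = 0 := by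
  rw [Tr_eq_sum, AddMonoidAlgebra.coeff_zero]; exact Finsupp.sum_zero_index

noncomputable def TrHom : MvPolynomial (Fin n) K →+ MvPolynomial (Fin n) K :=
  AddMonoidHom.mk' (Tr n p K) (Tr_add n p K)

-- box exponents
noncomputable def vt (t : Fin n → Fin p) : Fin n →₀ ℕ :=
  Finsupp.equivFunOnFinite.symm (fun j => (t j : ℕ))
noncomputable def wt (t : Fin n → Fin p) : Fin n →₀ ℕ :=
  Finsupp.equivFunOnFinite.symm (fun j => p - 1 - (t j : ℕ))

lemma modlem (tj sj : ℕ) (ht : tj < p) (hs : sj < p) :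
    ((p - 1 - tj + sj) % p = p - 1) ↔ sj = tj := by
  rcases lt_or_ge (p - 1 - tj + sj) p with h | h
  · rw [Nat.mod_eq_of_lt h]; omega
  · have h2 : p - 1 - tj + sj - p < p := by omega
    rw [Nat.mod_eq_sub_mod h, Nat.mod_eq_of_lt h2]; omega

lemma Tr_box (t s : Fin n → Fin p) :
    Tr n p K (monomial (wt n p t + vt n p s) (1 : K)) = if t = s then 1 else 0 := by
  have hp : 0 < p := (Fact.out : p.Prime).pos
  rw [Tr_monomial]
  unfold TrF
  have hcond : (∀ j, (wt n p t + vt n p s) j % p = p - 1) ↔ t = s := by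
    constructor
    · intro h
      funext j
      have := (modlem p (t j) (s j) (t j).isLt (s j).isLt).mp (h j)
      exact (Fin.ext this).symm
    · rintro rfl j
      exact (modlem p (t j) (t j) (t j).isLt (t j).isLt).mpr rfl
  split_ifs with h1 h2 h2
  · have he : Finsupp.mapRange (fun a => (a + 1) / p - 1)
        (by simp [Nat.div_eq_of_lt (Fact.out : p.Prime).one_lt]) (wt n p t + vt n p s)
        = 0 := by
      apply Finsupp.ext; intro j
      simp only [Finsupp.mapRange_apply, Finsupp.coe_zero, Pi.zero_apply]
      have hj := h1 j
      have hval : (wt n p t + vt n p s) j = p - 1 := by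
        have hlt : (wt n p t + vt n p s) j < 2 * p - 1 := by
          show p - 1 - (t j : ℕ) + (s j : ℕ) < 2 * p - 1
          have := (s j).isLt; omega
        rcases lt_or_ge ((wt n p t + vt n p s) j) p with h | h
        · rw [Nat.mod_eq_of_lt h] at hj; omega
        · rw [Nat.mod_eq_sub_mod h, Nat.mod_eq_of_lt (by omega)] at hj; omega
      rw [hval]
      have hpp : p - 1 + 1 = p := by omega
      rw [hpp, Nat.div_self hp]
      rfl
    rw [he, map_one, monomial_zero', C_1]
  · exact absurd (hcond.mp h1) h2
  · exact absurd (hcond.mpr h2) h1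
  · rfl

-- decomposition of a monomial
lemma mono_decomp (u : Fin n →₀ ℕ) (a : K) :
    (monomial u a : MvPolynomial (Fin n) K)
      = (monomial (u.mapRange (· / p) (Nat.zero_div p)) ((frobeniusEquiv K p).symm a)) ^ p
        * monomial (vt n p (fun j => ⟨u j % p, Nat.mod_lt _ (Fact.out : p.Prime).pos⟩)) 1 := by
  rw [monomial_pow, monomial_mul]
  have he : p • (u.mapRange (· / p) (Nat.zero_div p))
      + vt n p (fun j => ⟨u j % p, Nat.mod_lt _ (Fact.out : p.Prime).pos⟩) = u := by
    apply Finsupp.ext; intro j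
    show p • (u j / p) + u j % p = u j
    rw [smul_eq_mul]
    exact Nat.div_add_mod (u j) p
  have hb : ((frobeniusEquiv K p).symm a) ^ p * 1 = a := by
    rw [mul_one]
    have := RingEquiv.apply_symm_apply (frobeniusEquiv K p) a
    rwa [frobeniusEquiv_apply, frobenius_def] at this
  rw [he, hb]

-- extensionality for semilinear maps
lemma psi_ext (ψ₁ ψ₂ : MvPolynomial (Fin n) K →+ MvPolynomial (Fin n) K)
    (h₁ : ∀ r g, ψ₁ (r ^ p * g) = r * ψ₁ g) (h₂ : ∀ r g, ψ₂ (r ^ p * g) = r * ψ₂ g)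
    (hbox : ∀ t : Fin n → Fin p, ψ₁ (monomial (vt n p t) 1) = ψ₂ (monomial (vt n p t) 1)) :
    ∀ g, ψ₁ g = ψ₂ g := by
  intro g
  induction g using MvPolynomial.induction_on' with
  | add g h ihg ihh => rw [map_add, map_add, ihg, ihh]
  | monomial u a =>
    rw [mono_decomp n p K u a, h₁, h₂, hbox]

-- expansion identity
lemma expansion (h : MvPolynomial (Fin n) K) :
    h = ∑ t : Fin n → Fin p,
        (Tr n p K (h * monomial (wt n p t) 1)) ^ p * monomial (vt n p t) 1 := by
  induction h using MvPolynomial.induction_on' with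
  | add g h ihg ihh =>
    conv_lhs => rw [ihg, ihh]
    rw [← Finset.sum_add_distrib]
    apply Finset.sum_congr rfl
    intro t _
    rw [add_mul, Tr_add, add_pow_char, add_mul]
  | monomial u a =>
    have hp : 0 < p := (Fact.out : p.Prime).pos
    set t₀ : Fin n → Fin p := fun j => ⟨u j % p, Nat.mod_lt _ hp⟩ with ht₀
    rw [Finset.sum_eq_single_of_mem t₀ (Finset.mem_univ _)]
    · rw [monomial_mul, mul_one, Tr_monomial]
      unfold TrF
      rw [if_pos]
      · have he : Finsupp.mapRange (fun a => (a + 1) / p - 1)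
            (by simp [Nat.div_eq_of_lt (Fact.out : p.Prime).one_lt]) (u + wt n p t₀)
            = u.mapRange (· / p) (Nat.zero_div p) := by
          apply Finsupp.ext; intro j
          show (u j + (p - 1 - (u j % p)) + 1) / p - 1 = u j / p
          have hd := Nat.div_add_mod (u j) p
          have hm := Nat.mod_lt (u j) hp
          have : u j + (p - 1 - (u j % p)) + 1 = p * (u j / p + 1) := by
            rw [Nat.mul_add, Nat.mul_one]; omega
          rw [this, Nat.mul_div_cancel_left _ hp]
          exact Nat.add_sub_cancel _ _
        rw [he, mono_decomp n p K u a, monomial_pow]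
      · intro j
        show (u j + (p - 1 - (u j % p))) % p = p - 1
        have hd := Nat.div_add_mod (u j) p
        have hm := Nat.mod_lt (u j) hp
        have : u j + (p - 1 - (u j % p)) = p * (u j / p) + (p - 1 - (u j % p) + u j % p) := by
          omega
        rw [this, Nat.mul_add_mod]
        exact (modlem p (u j % p) (u j % p) hm hm).mpr rfl
    · intro t _ hne
      rw [monomial_mul, mul_one, Tr_monomial]
      unfold TrF
      rw [if_neg]
      · rw [zero_pow (Fact.out : p.Prime).ne_zero, zero_mul]
      · intro hcond
        apply hne
        funext j
        have hj := hcond j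
        have hd := Nat.div_add_mod (u j) p
        have hm := Nat.mod_lt (u j) hp
        have hrw : (u + wt n p t) j = p * (u j / p) + (p - 1 - (t j : ℕ) + u j % p) := by
          show u j + (p - 1 - (t j : ℕ)) = _
          have := (t j).isLt
          omega
        rw [hrw, Nat.mul_add_mod] at hj
        have := (modlem p (t j) (u j % p) (t j).isLt hm).mp hj
        exact Fin.ext this.symm

lemma Tr_sum {ι : Type} (s : Finset ι) (F : ι → MvPolynomial (Fin n) K) :
    Tr n p K (∑ i ∈ s, F i) = ∑ i ∈ s, Tr n p K (F i) :=
  map_sum (TrHom n p K) F s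

noncomputable def star' (t : Fin n → Fin p) : Fin n → Fin p :=
  fun j => ⟨p - 1 - (t j : ℕ), by have := (Fact.out : p.Prime).pos; omega⟩

lemma wt_star (t : Fin n → Fin p) : wt n p (star' n p t) = vt n p t := by
  apply Finsupp.ext; intro j
  show p - 1 - (p - 1 - (t j : ℕ)) = t j
  have := (t j).isLt; omega

lemma starInv (t : Fin n → Fin p) : star' n p (star' n p t) = t := by
  funext j
  apply Fin.ext
  show p - 1 - (p - 1 - (t j : ℕ)) = t j
  have := (t j).isLt; omega

lemma star_eq_iff (t s : Fin n → Fin p) : star' n p t = s ↔ t = star' n p s := by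
  constructor
  · rintro rfl; exact (starInv n p t).symm
  · rintro rfl; exact starInv n p s

lemma Tr_box2 (t s : Fin n → Fin p) :
    Tr n p K (monomial (vt n p t + vt n p s) (1 : K)) = if t = star' n p s then 1 else 0 := by
  rw [← wt_star n p t, Tr_box]
  exact if_congr (star_eq_iff n p t s) rfl rfl


/-- The map `Φ : F_*S → Hom_S(F_*S, S)`, `f ↦ (g ↦ Tr (f g))`, is an
isomorphism of `F_*S`-modules: each `Φ f` is `S`-linear on `F_*S` (i.e. additive with
`Tr (f·(r^p·g)) = r · Tr (f·g)`), and every `S`-linear map `ψ : F_*S → S` is of the form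
`Φ f` for a unique `f` (bijectivity; `F_*S`-semilinearity of `Φ` holds by definition since
the `F_*S`-action on `Hom_S(F_*S,S)` is `(a ⋆ φ) g = φ (a g)`). -/
theorem stmt1 (n p : ℕ) [Fact p.Prime] (K : Type) [Field K] [CharP K p] [PerfectRing K p] :
    (∀ f r g : MvPolynomial (Fin n) K,
        Tr n p K (f * (r ^ p * g)) = r * Tr n p K (f * g)) ∧
    (∀ ψ : MvPolynomial (Fin n) K →+ MvPolynomial (Fin n) K,
      (∀ r g : MvPolynomial (Fin n) K, ψ (r ^ p * g) = r * ψ g) →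
        ∃! f : MvPolynomial (Fin n) K, ∀ g, ψ g = Tr n p K (f * g)) := by
  have hpart1 : ∀ f r g : MvPolynomial (Fin n) K,
      Tr n p K (f * (r ^ p * g)) = r * Tr n p K (f * g) := by
    intro f r g
    rw [show f * (r ^ p * g) = r ^ p * (f * g) from by ring, Tr_pow_mul]
  refine ⟨hpart1, ?_⟩
  intro ψ hψ
  refine ⟨∑ t : Fin n → Fin p, (ψ (monomial (wt n p t) 1)) ^ p * monomial (vt n p t) 1,
    ?_, ?_⟩
  · set f := ∑ t : Fin n → Fin p, (ψ (monomial (wt n p t) 1)) ^ p * monomial (vt n p t) 1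
      with hf
    set Φ : MvPolynomial (Fin n) K →+ MvPolynomial (Fin n) K :=
      AddMonoidHom.mk' (fun g => Tr n p K (f * g))
        (fun a b => by
          show Tr n p K (f * (a + b)) = Tr n p K (f * a) + Tr n p K (f * b)
          rw [mul_add, Tr_add]) with hΦ
    intro g
    refine psi_ext n p K ψ Φ hψ (fun r g => hpart1 f r g) ?_ g
    intro s
    show ψ (monomial (vt n p s) 1) = Tr n p K (f * monomial (vt n p s) 1)
    rw [hf, Finset.sum_mul]
    simp only [mul_assoc, monomial_mul, mul_one]
    rw [Tr_sum]
    simp only [Tr_pow_mul, Tr_box2, mul_ite, mul_one, mul_zero]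
    rw [Finset.sum_ite_eq' Finset.univ (star' n p s)
      (fun t => ψ (monomial (wt n p t) 1)), if_pos (Finset.mem_univ _), wt_star]
  · intro y hy
    conv_lhs => rw [expansion n p K y]
    apply Finset.sum_congr rfl
    intro t _
    rw [← hy (monomial (wt n p t) 1)]

end
end

section
/- Let $S = K[X_1,\ldots,X_n]$ over a perfect field $K$ of characteristic $p > 0$ and let $\theta = X_1^{p-1}\cdots X_n^{p-1} \star \mathrm{Tr}$, i.e., $\theta(g) = \mathrm{Tr}(X_1^{p-1}\cdots X_n^{p-1} g)$. Then $\theta$ is an $F$-splitting of $S$, and an ideal $I \subset S$ satisfies $\theta(I) \subseteq I$ if and only if $I$ is a squarefree monomial ideal. -/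
open MvPolynomial
open scoped Classical

/-- An ideal of `K[X_1,…,X_n]` is a squarefree monomial ideal if it is generated by
monomials all of whose exponents are at most `1`. -/
def IsSqFreeMonomialIdeal (n : ℕ) (K : Type) [Field K]
    (I : Ideal (MvPolynomial (Fin n) K)) : Prop :=
  ∃ G : Set (Fin n →₀ ℕ), (∀ u ∈ G, ∀ j, u j ≤ 1) ∧
    I = Ideal.span ((fun u => monomial u (1 : K)) '' G)

section Aux

lemma nat1 {p : ℕ} (hp : 1 < p) (x : ℕ) : (p * x + (p - 1)) % p = p - 1 := by
  rw [Nat.mul_add_mod]; exact Nat.mod_eq_of_lt (by omega)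

lemma nat2 {p : ℕ} (hp : 1 < p) (x : ℕ) : (p * x + (p - 1) + 1) / p - 1 = x := by
  have h : p * x + (p - 1) + 1 = p * (x + 1) := by have := mul_add p x 1; omega
  rw [h, Nat.mul_div_cancel_left _ (by omega : 0 < p)]
  omega

lemma nat3 {p : ℕ} (hp : 1 < p) {u w : ℕ} (h1 : u % p = p - 1)
    (h2 : (u + 1) / p - 1 = w) : u = p * w + (p - 1) := by
  have hd := Nat.div_add_mod u p
  have hu : u + 1 = p * (u / p + 1) := by have := mul_add p (u / p) 1; omega
  have h3 : (u + 1) / p = u / p + 1 := by rw [hu, Nat.mul_div_cancel_left _ (by omega : 0 < p)]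
  subst h2
  rw [h3, Nat.add_sub_cancel]
  omega

lemma nat4 {p : ℕ} (hp : 0 < p) (β M : ℕ) :
    β ≤ p * M ↔ β / p ≤ M ∧ β % p ≤ p * (M - β / p) := by
  have hq := Nat.div_add_mod β p
  have hr : β % p < p := Nat.mod_lt _ hp
  constructor
  · intro h
    have hqM : β / p ≤ M := by
      have := Nat.div_le_div_right (c := p) h
      rwa [Nat.mul_div_cancel_left _ hp] at this
    refine ⟨hqM, ?_⟩
    obtain ⟨d, hd⟩ := Nat.exists_eq_add_of_le hqM
    have h2 : p * M = p * (β / p) + p * d := by rw [hd, mul_add]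
    have h3 : M - β / p = d := by omega
    rw [h3]; omega
  · rintro ⟨hqM, h⟩
    obtain ⟨d, hd⟩ := Nat.exists_eq_add_of_le hqM
    have h2 : p * M = p * (β / p) + p * d := by rw [hd, mul_add]
    have h3 : M - β / p = d := by omega
    rw [h3] at h; omega

lemma nat5 {p : ℕ} (hp : 0 < p) {β M : ℕ} (h : β ≤ p * M) :
    p * (M - β / p) - β % p = p * M - β := by
  have hq := Nat.div_add_mod β p
  have hqM : β / p ≤ M := by
    have := Nat.div_le_div_right (c := p) h
    rwa [Nat.mul_div_cancel_left _ hp] at this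
  obtain ⟨d, hd⟩ := Nat.exists_eq_add_of_le hqM
  have h2 : p * M = p * (β / p) + p * d := by rw [hd, mul_add]
  have h3 : M - β / p = d := by omega
  rw [h3]; omega

lemma nat6 {P x y s t : ℕ} (hx : x < P) (hy : y < P)
    (h : x + P * s = P * t + y) : x = y ∧ s = t := by
  rcases le_total s t with hst | hst
  · obtain ⟨d, rfl⟩ := Nat.exists_eq_add_of_le hst
    rw [mul_add] at h
    have hd : d = 0 := by
      by_contra hd
      have : P ≤ P * d := Nat.le_mul_of_pos_right P (Nat.pos_of_ne_zero hd)
      omega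
    subst hd
    omega
  · obtain ⟨d, rfl⟩ := Nat.exists_eq_add_of_le hst
    rw [mul_add] at h
    have hd : d = 0 := by
      by_contra hd
      have : P ≤ P * d := Nat.le_mul_of_pos_right P (Nat.pos_of_ne_zero hd)
      omega
    subst hd
    omega

variable (n p : ℕ) [Fact p.Prime] (K : Type) [Field K] [CharP K p] [PerfectRing K p]

/-- the all-`(p-1)` exponent vector -/
noncomputable def psi0 : Fin n →₀ ℕ := Finsupp.equivFunOnFinite.symm fun _ => p - 1

lemma psi0_apply (j : Fin n) : psi0 n p j = p - 1 := rfl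

lemma coeff_Tr (g : MvPolynomial (Fin n) K) (w : Fin n →₀ ℕ) :
    coeff w (Tr n p K g) = (frobeniusEquiv K p).symm (coeff (p • w + psi0 n p) g) := by
  have hp1 : 1 < p := (Fact.out : p.Prime).one_lt
  rw [Tr, MvPolynomial.coeff_sum]
  rw [Finset.sum_congr rfl (g := fun u =>
      if u = p • w + psi0 n p then (frobeniusEquiv K p).symm (coeff u g) else 0)]
  · rw [Finset.sum_ite_eq' g.support]
    split_ifs with h
    · rfl
    · rw [notMem_support_iff.mp h, map_zero]
  · intro u _
    have happ : ∀ j, (p • w + psi0 n p) j = p * w j + (p - 1) := fun j => by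
      simp [psi0_apply, Finsupp.add_apply, Finsupp.smul_apply, mul_comm]
    split_ifs with h1 h2 h2
    · subst h2
      rw [coeff_monomial, if_pos]
      ext j
      rw [Finsupp.mapRange_apply, happ j, nat2 hp1]
    · rw [coeff_monomial, if_neg]
      intro hφ
      apply h2
      ext j
      have hφj : (u j + 1) / p - 1 = w j := by rw [← hφ]; rfl
      rw [happ j, ← nat3 hp1 (h1 j) hφj]
    · exfalso; apply h1
      intro j
      rw [h2, happ j, nat1 hp1]
    · rfl

lemma coeff_theta (g : MvPolynomial (Fin n) K) (w : Fin n →₀ ℕ) :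
    frobenius K p (coeff w (Tr n p K (monomial (psi0 n p) 1 * g))) = coeff (p • w) g := by
  rw [coeff_Tr, frobenius_apply_frobeniusEquiv_symm, add_comm, coeff_monomial_mul, one_mul]

lemma coeff_mono_mul (B : Fin n →₀ ℕ) (g : MvPolynomial (Fin n) K) (w : Fin n →₀ ℕ) :
    coeff w (monomial B (1 : K) * g) = if B ≤ w then coeff (w - B) g else 0 := by
  rw [coeff_monomial_mul']
  split_ifs <;> simp

lemma coeff_pow_p (r : MvPolynomial (Fin n) K) (w : Fin n →₀ ℕ) :
    coeff (p • w) (r ^ p) = (coeff w r) ^ p := by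
  have hpp : 0 < p := (Fact.out : p.Prime).pos
  induction r using MvPolynomial.induction_on' with
  | monomial u a =>
    rw [monomial_pow, coeff_monomial, coeff_monomial]
    split_ifs with h h' h'
    · rfl
    · exfalso; apply h'
      ext j
      have := DFunLike.congr_fun h j
      simp only [Finsupp.smul_apply, smul_eq_mul] at this
      exact Nat.eq_of_mul_eq_mul_left hpp this
    · exact absurd (by rw [h']) h
    · rw [zero_pow hpp.ne']
  | add f g hf hg =>
    rw [add_pow_char, coeff_add, coeff_add, hf, hg, add_pow_char]

lemma iter_theta (I : Ideal (MvPolynomial (Fin n) K))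
    (hI : ∀ g ∈ I, Tr n p K (monomial (psi0 n p) 1 * g) ∈ I) :
    ∀ (e : ℕ) (g : MvPolynomial (Fin n) K), g ∈ I → ∀ B : Fin n →₀ ℕ,
      ∃ g' ∈ I, ∀ w, (frobenius K p)^[e] (coeff w g') =
        if B ≤ p ^ e • w then coeff (p ^ e • w - B) g else 0 := by
  have hpp : 0 < p := (Fact.out : p.Prime).pos
  intro e
  induction e with
  | zero =>
    intro g hg B
    refine ⟨monomial B 1 * g, I.mul_mem_left _ hg, fun w => ?_⟩
    simp only [Function.iterate_zero, id_eq, pow_zero, one_smul]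
    apply coeff_mono_mul
  | succ e ih =>
    intro g hg B
    set b := B.mapRange (· % p) (Nat.zero_mod p) with hb
    set B' := B.mapRange (· / p) (Nat.zero_div p) with hB'
    have h1 : Tr n p K (monomial (psi0 n p) 1 * (monomial b 1 * g)) ∈ I :=
      hI _ (I.mul_mem_left _ hg)
    obtain ⟨g', hg'I, hco⟩ := ih _ h1 B'
    refine ⟨g', hg'I, fun w => ?_⟩
    have key : ∀ v : Fin n →₀ ℕ,
        frobenius K p (coeff v (Tr n p K (monomial (psi0 n p) 1 * (monomial b 1 * g)))) =
        if b ≤ p • v then coeff (p • v - b) g else 0 := fun v => by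
      rw [coeff_theta, coeff_mono_mul]
    have hsmul : p ^ (e + 1) • w = p • p ^ e • w := by rw [← mul_smul, ← pow_succ']
    have hiff : B ≤ p ^ (e + 1) • w ↔ (B' ≤ p ^ e • w ∧ b ≤ p • (p ^ e • w - B')) := by
      simp only [Finsupp.le_def, ← forall_and]
      apply forall_congr'
      intro j
      simp only [hsmul, Finsupp.smul_apply, Finsupp.tsub_apply, hb, hB',
        Finsupp.mapRange_apply, smul_eq_mul]
      rw [← mul_assoc, ← pow_succ', pow_succ', mul_assoc]
      exact nat4 hpp (B j) (p ^ e * w j)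
    have hexp : B ≤ p ^ (e + 1) • w → p • (p ^ e • w - B') - b = p ^ (e + 1) • w - B := by
      intro h
      ext j
      have hj := Finsupp.le_def.mp h j
      simp only [hsmul, Finsupp.smul_apply, Finsupp.tsub_apply, hb, hB',
        Finsupp.mapRange_apply, smul_eq_mul] at hj ⊢
      exact nat5 hpp hj
    rw [Function.iterate_succ_apply', hco w, apply_ite (frobenius K p), map_zero, key]
    by_cases hB : B ≤ p ^ (e + 1) • w
    · obtain ⟨hc1, hc2⟩ := hiff.mp hB
      rw [if_pos hc1, if_pos hc2, if_pos hB, hexp hB]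
    · rw [if_neg hB]
      by_cases hc1 : B' ≤ p ^ e • w
      · rw [if_pos hc1, if_neg fun hc2 => hB (hiff.mpr ⟨hc1, hc2⟩)]
      · rw [if_neg hc1]

lemma sq_mem (I : Ideal (MvPolynomial (Fin n) K))
    (hI : ∀ g ∈ I, Tr n p K (monomial (psi0 n p) 1 * g) ∈ I)
    (g : MvPolynomial (Fin n) K) (hg : g ∈ I) (a : Fin n →₀ ℕ) (ha : a ∈ g.support) :
    monomial (a.mapRange (fun t => min t 1) (by simp)) (1 : K) ∈ I := by
  have hp1 : 1 < p := (Fact.out : p.Prime).one_lt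
  set σa : Fin n →₀ ℕ := a.mapRange (fun t => min t 1) (by simp) with hσ
  obtain ⟨e, he⟩ : ∃ e, ∀ v ∈ g.support, ∀ j, v j < p ^ e := by
    refine ⟨(g.support.sup fun v => Finset.univ.sup v) + 1, fun v hv j => ?_⟩
    have h1 : v j ≤ g.support.sup fun v => Finset.univ.sup v :=
      le_trans (Finset.le_sup (f := fun j => v j) (Finset.mem_univ j))
        (Finset.le_sup (f := fun v : Fin n →₀ ℕ => Finset.univ.sup fun j => v j) hv)
    calc v j < (g.support.sup fun v => Finset.univ.sup v) + 1 := by omega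
      _ < 2 ^ ((g.support.sup fun v => Finset.univ.sup v) + 1) := Nat.lt_two_pow_self
      _ ≤ p ^ ((g.support.sup fun v => Finset.univ.sup v) + 1) :=
          Nat.pow_le_pow_left (by omega) _
  set B : Fin n →₀ ℕ := p ^ e • σa - a with hB
  obtain ⟨g', hg'I, hco⟩ := iter_theta n p K I hI e g hg B
  have hale : ∀ j, a j ≤ p ^ e * σa j := by
    intro j
    rcases Nat.eq_zero_or_pos (a j) with h0 | h0
    · omega
    · have : σa j = 1 := by simp [hσ, Finsupp.mapRange_apply]; omega
      rw [this, mul_one]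
      exact (he a ha j).le
  have hguard : B ≤ p ^ e • σa := fun j => by
    simp only [hB, Finsupp.tsub_apply]
    exact Nat.sub_le _ _
  have hexp : p ^ e • σa - B = a := by
    ext j
    have := hale j
    simp only [hB, Finsupp.tsub_apply, Finsupp.smul_apply, smul_eq_mul]
    omega
  have hc0 : coeff σa g' ≠ 0 := by
    intro h0
    have := hco σa
    rw [if_pos hguard, hexp, h0] at this
    simp only [map_zero, Function.iterate_fixed (map_zero _)] at this
    exact mem_support_iff.mp ha this.symm
  have hsupp : ∀ w, w ≠ σa → coeff w g' = 0 := by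
    intro w hw
    by_contra h0
    have hco_w := hco w
    have hFne : (frobenius K p)^[e] (coeff w g') ≠ 0 := by
      rw [iterate_frobenius]
      exact pow_ne_zero _ h0
    rw [hco_w] at hFne
    split_ifs at hFne with hg2
    · -- the preimage monomial is in the support of g
      have hmem : p ^ e • w - B ∈ g.support := mem_support_iff.mpr hFne
      apply hw
      ext j
      have hj1 : B j ≤ p ^ e * w j := by
        have := Finsupp.le_def.mp hg2 j
        simpa [Finsupp.smul_apply, smul_eq_mul] using this
      have hBj : B j = p ^ e * σa j - a j := by
        simp [hB, Finsupp.tsub_apply, Finsupp.smul_apply]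
      have hj2 : (p ^ e • w - B) j + p ^ e * σa j = p ^ e * w j + a j := by
        simp only [Finsupp.tsub_apply, Finsupp.smul_apply, smul_eq_mul]
        rw [hBj] at hj1 ⊢
        have := hale j
        omega
      have hx := he _ hmem j
      have hy := he a ha j
      exact ((nat6 hx hy hj2).2).symm
    · exact hFne rfl
  set c := coeff σa g' with hc
  have hmono : g' = monomial σa c := by
    ext w
    rw [coeff_monomial]
    split_ifs with h
    · rw [← h]
    · exact hsupp w (fun hww => h hww.symm)
  have hfin : monomial σa (1 : K) = C c⁻¹ * g' := by
    rw [hmono, C_mul_monomial, inv_mul_cancel₀ hc0]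
  rw [hfin]
  exact I.mul_mem_left _ hg'I

end Aux

/-- `θ = X_1^{p-1}⋯X_n^{p-1} ⋆ Tr`, i.e. `θ g = Tr (X_1^{p-1}⋯X_n^{p-1} g)`,
is an `F`-splitting of `S = K[X_1,…,X_n]` (`θ ∘ F = id`), and an ideal `I ⊆ S` is
compatibly split with respect to `θ` (`θ(I) ⊆ I`) if and only if `I` is a squarefree
monomial ideal. -/
theorem stmt3 (n p : ℕ) [Fact p.Prime] (K : Type) [Field K] [CharP K p] [PerfectRing K p] :
    (∀ r : MvPolynomial (Fin n) K,
      Tr n p K (monomial (Finsupp.equivFunOnFinite.symm fun _ => p - 1) (1 : K) * r ^ p) = r) ∧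
    (∀ I : Ideal (MvPolynomial (Fin n) K),
      (∀ g ∈ I,
        Tr n p K (monomial (Finsupp.equivFunOnFinite.symm fun _ => p - 1) (1 : K) * g) ∈ I)
        ↔ IsSqFreeMonomialIdeal n K I) := by
  have hψ : (Finsupp.equivFunOnFinite.symm fun _ => p - 1 : Fin n →₀ ℕ) = psi0 n p := rfl
  constructor
  · intro r
    apply MvPolynomial.ext
    intro w
    apply (frobeniusEquiv K p).injective
    show frobenius K p _ = frobenius K p _
    rw [hψ, coeff_theta n p K (r ^ p) w, coeff_pow_p, frobenius_def]
  · intro I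
    constructor
    · intro hI
      rw [hψ] at hI
      refine ⟨{u | (∀ j, u j ≤ 1) ∧ monomial u (1 : K) ∈ I}, fun u hu => hu.1, ?_⟩
      apply le_antisymm
      · intro g hg
        rw [mem_ideal_span_monomial_image]
        intro a ha
        refine ⟨a.mapRange (fun t => min t 1) (by simp),
          ⟨fun j => by rw [Finsupp.mapRange_apply]; exact min_le_right _ _,
            sq_mem n p K I hI g hg a ha⟩,
          Finsupp.le_def.mpr fun j => by rw [Finsupp.mapRange_apply]; exact min_le_left _ _⟩
      · rw [Ideal.span_le]
        rintro _ ⟨u, hu, rfl⟩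
        exact hu.2
    · rintro ⟨G, hG1, rfl⟩ g hg
      rw [hψ, mem_ideal_span_monomial_image]
      rw [mem_ideal_span_monomial_image] at hg
      intro w hw
      have hne : coeff (p • w) g ≠ 0 := by
        rw [← coeff_theta n p K g w, frobenius_def]
        exact pow_ne_zero _ (mem_support_iff.mp hw)
      obtain ⟨u, huG, hule⟩ := hg (p • w) (mem_support_iff.mpr hne)
      refine ⟨u, huG, Finsupp.le_def.mpr fun j => ?_⟩
      have h1 := hG1 u huG j
      have h2 := Finsupp.le_def.mp hule j
      simp only [Finsupp.smul_apply, smul_eq_mul] at h2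
      rcases Nat.eq_zero_or_pos (w j) with h0 | h0
      · rw [h0, mul_zero] at h2; omega
      · omega
end

section
/- Let $S = K[X_1,\ldots,X_n]$ over a perfect field $K$ of characteristic $p > 0$, let $w \in (\mathbb{N}_{>0})^n$ be a weight vector, and let $g \in S$. Then either $\mathrm{Tr}(\mathrm{in}_w(g)) = 0$ or $\mathrm{Tr}(\mathrm{in}_w(g)) = \mathrm{in}_w(\mathrm{Tr}(g))$. -/
open MvPolynomial
open scoped Classical

/-- The `w`-degree of a polynomial: the maximum of `∑ j, w j * u j` over the exponent
vectors `u` in its support. -/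
def wdeg (n : ℕ) (K : Type) [Field K] (w : Fin n → ℕ)
    (g : MvPolynomial (Fin n) K) : ℕ :=
  g.support.sup fun u => ∑ j, w j * u j

/-- The initial form `in_w(g)`: the sum of the terms of `g` of maximal `w`-degree. -/
noncomputable def inw (n : ℕ) (K : Type) [Field K] (w : Fin n → ℕ)
    (g : MvPolynomial (Fin n) K) : MvPolynomial (Fin n) K :=
  ∑ u ∈ g.support,
    if (∑ j, w j * u j) = wdeg n K w g then monomial u (coeff u g) else 0

noncomputable def psiF (n p : ℕ) (v : Fin n →₀ ℕ) : Fin n →₀ ℕ :=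
  Finsupp.equivFunOnFinite.symm (fun j => p * (v j + 1) - 1)

lemma psiF_apply (n p : ℕ) (v : Fin n →₀ ℕ) (j : Fin n) :
    psiF n p v j = p * (v j + 1) - 1 := rfl

section Aux

variable (n p : ℕ) [Fact p.Prime] (K : Type) [Field K] [CharP K p] [PerfectRing K p]

lemma hp2 : 1 < p := (Fact.out : p.Prime).one_lt

lemma dvd_succ_of_mod (a : ℕ) (h : a % p = p - 1) : p ∣ a + 1 := by
  have h1 : 1 ≤ p := le_of_lt (hp2 p)
  apply Nat.dvd_of_mod_eq_zero
  rw [Nat.add_mod, h, Nat.mod_eq_of_lt (hp2 p), Nat.sub_add_cancel h1, Nat.mod_self]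

lemma good_psiF (v : Fin n →₀ ℕ) (j : Fin n) : psiF n p v j % p = p - 1 := by
  rw [psiF_apply]
  have h1 : 1 ≤ p := le_of_lt (hp2 p)
  have h2 : p * (v j + 1) = p * (v j) + p := by ring
  have h3 : p * (v j + 1) - 1 = p * (v j) + (p - 1) := by omega
  rw [h3, Nat.mul_add_mod, Nat.mod_eq_of_lt (by omega)]

lemma mapRange_psiF (v : Fin n →₀ ℕ)
    (h0 : (fun a => (a + 1) / p - 1) 0 = 0) :
    (psiF n p v).mapRange (fun a => (a + 1) / p - 1) h0 = v := by
  ext j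
  rw [Finsupp.mapRange_apply, psiF_apply]
  have h1 : 1 ≤ p := le_of_lt (hp2 p)
  have h2 : 1 ≤ p * (v j + 1) := Nat.one_le_iff_ne_zero.mpr (by positivity)
  have h3 : p * (v j + 1) - 1 + 1 = p * (v j + 1) := by omega
  rw [h3, Nat.mul_div_cancel_left _ (by omega : 0 < p)]
  omega

lemma eq_psiF_of (u v : Fin n →₀ ℕ) (hm : ∀ j, u j % p = p - 1)
    (h0 : (fun a => (a + 1) / p - 1) 0 = 0)
    (he : u.mapRange (fun a => (a + 1) / p - 1) h0 = v) :
    u = psiF n p v := by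
  ext j
  have h1 : 1 < p := hp2 p
  have hd : p ∣ u j + 1 := dvd_succ_of_mod p (u j) (hm j)
  have hq : p * ((u j + 1) / p) = u j + 1 := Nat.mul_div_cancel' hd
  have hge : p - 1 ≤ u j := (hm j) ▸ Nat.mod_le (u j) p
  have hq1 : 1 ≤ (u j + 1) / p := by
    rw [Nat.one_le_div_iff (by omega : 0 < p)]; omega
  have hb : (u j + 1) / p - 1 = v j := by
    rw [← he, Finsupp.mapRange_apply]
  have hq2 : (u j + 1) / p = v j + 1 := by omega
  rw [hq2] at hq
  rw [psiF_apply]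
  omega

lemma Tr_coeff (g : MvPolynomial (Fin n) K) (v : Fin n →₀ ℕ) :
    coeff v (Tr n p K g) = (frobeniusEquiv K p).symm (coeff (psiF n p v) g) := by
  classical
  rw [Tr, MvPolynomial.coeff_sum]
  have hstep : ∀ u ∈ g.support,
      coeff v (if (∀ j, u j % p = p - 1) then
        monomial (u.mapRange (fun a => (a + 1) / p - 1)
          (by simp [Nat.div_eq_of_lt (Fact.out : p.Prime).one_lt]))
          ((frobeniusEquiv K p).symm (coeff u g)) else 0)
      = if u = psiF n p v then (frobeniusEquiv K p).symm (coeff u g) else 0 := by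
    intro u _
    simp only [apply_ite (coeff v), coeff_monomial, coeff_zero]
    by_cases heq : u = psiF n p v
    · subst heq
      rw [if_pos (good_psiF n p _), if_pos (mapRange_psiF n p _ _), if_pos rfl]
    · rw [if_neg heq]
      split_ifs with h1 h2
      · exact absurd (eq_psiF_of n p u v h1 _ h2) heq
      · rfl
      · rfl
  rw [Finset.sum_congr rfl hstep, Finset.sum_ite_eq' g.support (psiF n p v)
    (fun u => (frobeniusEquiv K p).symm (coeff u g))]
  split_ifs with hm
  · rfl
  · rw [MvPolynomial.notMem_support_iff.mp hm, map_zero]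

lemma inw_coeff (w : Fin n → ℕ) (g : MvPolynomial (Fin n) K) (u : Fin n →₀ ℕ) :
    coeff u (inw n K w g) =
      if (∑ j, w j * u j) = wdeg n K w g then coeff u g else 0 := by
  classical
  rw [inw, MvPolynomial.coeff_sum]
  have hstep : ∀ u' ∈ g.support,
      coeff u (if (∑ j, w j * u' j) = wdeg n K w g then monomial u' (coeff u' g) else 0)
      = if u' = u then (if (∑ j, w j * u j) = wdeg n K w g then coeff u g else 0)
        else 0 := by
    intro u' _
    simp only [apply_ite (coeff u), coeff_monomial, coeff_zero]
    by_cases heq : u' = u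
    · subst heq; split_ifs <;> simp_all
    · rw [if_neg heq]; split_ifs <;> rfl
  rw [Finset.sum_congr rfl hstep, Finset.sum_ite_eq' g.support u]
  split_ifs with hm h1
  · rfl
  · rfl
  · rw [MvPolynomial.notMem_support_iff.mp hm]
  · rfl

lemma mem_support_Tr (g : MvPolynomial (Fin n) K) (v : Fin n →₀ ℕ) :
    v ∈ (Tr n p K g).support ↔ psiF n p v ∈ g.support := by
  rw [MvPolynomial.mem_support_iff, MvPolynomial.mem_support_iff, Tr_coeff, ne_eq, ne_eq,
    EmbeddingLike.map_eq_zero_iff]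

lemma wdeg_psiF (w : Fin n → ℕ) (v : Fin n →₀ ℕ) :
    (∑ j, w j * psiF n p v j) =
      p * (∑ j, w j * v j) + (p - 1) * (∑ j, w j) := by
  have h1 : 1 ≤ p := le_of_lt (hp2 p)
  have : ∀ j : Fin n, w j * psiF n p v j = p * (w j * v j) + (p - 1) * w j := by
    intro j
    rw [psiF_apply]
    have h2 : p * (v j + 1) = p * (v j) + p := by ring
    have h3 : p * (v j + 1) - 1 = p * (v j) + (p - 1) := by omega
    rw [h3]; ring
  rw [Finset.sum_congr rfl (fun j _ => this j), Finset.sum_add_distrib, ← Finset.mul_sum,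
    ← Finset.mul_sum]

end Aux

/-- For a weight vector `w ∈ (ℕ_{>0})^n` and `g ∈ S = K[X_1,…,X_n]`
(`K` perfect of characteristic `p > 0`), either `Tr (in_w g) = 0` or
`Tr (in_w g) = in_w (Tr g)`. -/
theorem stmt4 (n p : ℕ) [Fact p.Prime] (K : Type) [Field K] [CharP K p] [PerfectRing K p]
    (w : Fin n → ℕ) (hw : ∀ i, 0 < w i) (g : MvPolynomial (Fin n) K) :
    Tr n p K (inw n K w g) = 0 ∨
      Tr n p K (inw n K w g) = inw n K w (Tr n p K g) := by
  classical
  have hp1 : 0 < p := lt_trans one_pos (hp2 p)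
  -- coefficients of inw g
  have hinw : ∀ u : Fin n →₀ ℕ, coeff u (inw n K w g) =
      if (∑ j, w j * u j) = wdeg n K w g then coeff u g else 0 :=
    inw_coeff n K w g
  by_cases h : ∃ u ∈ g.support, (∀ j, u j % p = p - 1) ∧
      (∑ j, w j * u j) = wdeg n K w g
  · -- some top-degree term is "good"
    right
    obtain ⟨u0, hu0mem, hu0good, hu0deg⟩ := h
    set v0 : Fin n →₀ ℕ :=
      Finsupp.equivFunOnFinite.symm (fun j => (u0 j + 1) / p - 1) with hv0def
    have hψv0 : psiF n p v0 = u0 := by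
      ext j
      have hd : p ∣ u0 j + 1 := dvd_succ_of_mod p (u0 j) (hu0good j)
      have hq : p * ((u0 j + 1) / p) = u0 j + 1 := Nat.mul_div_cancel' hd
      have hge : p - 1 ≤ u0 j := (hu0good j) ▸ Nat.mod_le (u0 j) p
      have hq1 : 1 ≤ (u0 j + 1) / p := by
        rw [Nat.one_le_div_iff hp1]
        have := hp2 p
        omega
      have hv0j : v0 j = (u0 j + 1) / p - 1 := rfl
      rw [psiF_apply, hv0j]
      have h2 : (u0 j + 1) / p - 1 + 1 = (u0 j + 1) / p := by omega
      rw [h2]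
      omega
    have hv0mem : v0 ∈ (Tr n p K g).support := by
      rw [mem_support_Tr, hψv0]; exact hu0mem
    -- the w-degree of Tr g is attained at v0
    have hwTr : wdeg n K w (Tr n p K g) = ∑ j, w j * v0 j := by
      apply le_antisymm
      · apply Finset.sup_le
        intro v hv
        rw [mem_support_Tr] at hv
        have hle : (∑ j, w j * psiF n p v j) ≤ wdeg n K w g :=
          Finset.le_sup (f := fun u => ∑ j, w j * u j) hv
        rw [← hu0deg, ← hψv0, wdeg_psiF, wdeg_psiF] at hle
        have := Nat.le_of_add_le_add_right hle
        exact Nat.le_of_mul_le_mul_left this hp1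
      · exact Finset.le_sup (f := fun u => ∑ j, w j * u j) hv0mem
    -- the two conditions are equivalent for every v
    have hcond : ∀ v : Fin n →₀ ℕ,
        ((∑ j, w j * psiF n p v j) = wdeg n K w g ↔
          (∑ j, w j * v j) = ∑ j, w j * v0 j) := by
      intro v
      rw [← hu0deg, ← hψv0, wdeg_psiF, wdeg_psiF]
      constructor
      · intro hh
        have := Nat.add_right_cancel hh
        exact Nat.eq_of_mul_eq_mul_left hp1 this
      · intro hh; rw [hh]
    ext v
    rw [Tr_coeff, hinw, inw_coeff, Tr_coeff, hwTr]
    by_cases hc : (∑ j, w j * v j) = ∑ j, w j * v0 j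
    · rw [if_pos ((hcond v).mpr hc), if_pos hc]
    · rw [if_neg (fun hh => hc ((hcond v).mp hh)), if_neg hc, map_zero]
  · -- no top-degree term is "good"
    left
    push_neg at h
    ext v
    rw [Tr_coeff, hinw, coeff_zero]
    have : (if (∑ j, w j * psiF n p v j) = wdeg n K w g then coeff (psiF n p v) g
        else 0) = 0 := by
      split_ifs with hc
      · by_contra hne
        exact absurd hc (h (psiF n p v) (MvPolynomial.mem_support_iff.mpr hne)
          (good_psiF n p v))
      · rfl
    rw [this, map_zero]
end

section
/- Let $\mathcal{P}$ be a $G$-deforming property of rings, and let $R$ be an $\mathbb{N}$-graded Noetherian ring with $R_0 = K$ a field and $t \in R_1$ a nonzerodivisor on $R$. If $R/tR$ has property $\mathcal{P}$, then $R/(t-\lambda)R$ has property $\mathcal{P}$ for every $\lambda \in K$. -/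
open DirectSum LaurentPolynomial

section Aux

variable {K R S : Type*} [CommRing K] [CommRing R] [CommRing S] [Algebra K R]
variable (𝒜 : ℕ → Submodule K R) [GradedAlgebra 𝒜]

/-- Lift a ring hom `g : R →+* S` together with an element `u : S` to the ring hom
`R →+* S` sending a homogeneous element `a` of degree `n` to `g a * u ^ n`. -/
noncomputable def gradedLift (g : R →+* S) (u : S) : R →+* S :=
  (DirectSum.toSemiring
      (fun n => (AddMonoidHom.mulRight (u ^ n)).comp
        (g.toAddMonoidHom.comp (𝒜 n).subtype.toAddMonoidHom))
      (by simp [SetLike.coe_gOne]) (fun {i j} ai aj => by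
        simp only [AddMonoidHom.coe_comp, Function.comp_apply, LinearMap.toAddMonoidHom_coe,
          Submodule.coe_subtype, AddMonoidHom.coe_mulRight, RingHom.toAddMonoidHom_eq_coe,
          AddMonoidHom.coe_coe, SetLike.coe_gMul, map_mul, pow_add]
        ring)).comp
    (DirectSum.decomposeRingEquiv 𝒜).toRingHom

theorem gradedLift_of_mem (g : R →+* S) (u : S) {a : R} {n : ℕ} (ha : a ∈ 𝒜 n) :
    gradedLift 𝒜 g u a = g a * u ^ n := by
  unfold gradedLift
  rw [RingHom.comp_apply]
  have h1 : (DirectSum.decomposeRingEquiv 𝒜).toRingHom a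
      = DirectSum.of (fun n => 𝒜 n) n ⟨a, ha⟩ := DirectSum.decompose_of_mem 𝒜 ha
  rw [h1, DirectSum.toSemiring_of]
  rfl

theorem homog_ext (f g : R →+* S)
    (h : ∀ (n : ℕ) (a : R), a ∈ 𝒜 n → f a = g a) : f = g := by
  ext a
  classical
  rw [← DirectSum.sum_support_decompose 𝒜 a, map_sum, map_sum]
  exact Finset.sum_congr rfl fun n _ => h n _ (SetLike.coe_mem _)

end Aux

/-- Let `𝒫` be a `G`-deforming, isomorphism-invariant property of
commutative rings, i.e.:
(1) whenever `A` is an `ℕ`-graded Noetherian ring with `A₀ = K` and `x ∈ A₁` is a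
nonzerodivisor such that `A/xA` has `𝒫`, then `A_x` has `𝒫`; and
(2) whenever `A[X, X⁻¹]` has `𝒫`, so does `A`.
If `R` is an `ℕ`-graded Noetherian ring with `R₀ = K` a field, `t ∈ R₁` a nonzerodivisor
on `R`, and `R/tR` has `𝒫`, then `R/(t - λ)R` has `𝒫` for every `λ ∈ K`. -/
theorem stmt14 (K : Type) [Field K]
    (P : (A : Type) → [CommRing A] → Prop)
    (hiso : ∀ (A B : Type) [CommRing A] [CommRing B], (A ≃+* B) → P A → P B)
    (hP1 : ∀ (A : Type) [CommRing A] [IsNoetherianRing A] [Algebra K A]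
      (ℬ : ℕ → Submodule K A) [GradedAlgebra ℬ], ℬ 0 = 1 →
      ∀ x : A, x ∈ ℬ 1 → x ∈ nonZeroDivisors A →
        P (A ⧸ Ideal.span {x}) → P (Localization.Away x))
    (hP2 : ∀ (A : Type) [CommRing A], P (LaurentPolynomial A) → P A)
    (R : Type) [CommRing R] [IsNoetherianRing R] [Algebra K R]
    (𝒜 : ℕ → Submodule K R) [GradedAlgebra 𝒜] (h0 : 𝒜 0 = 1)
    (t : R) (ht : t ∈ 𝒜 1) (hreg : t ∈ nonZeroDivisors R)
    (hPt : P (R ⧸ Ideal.span {t})) :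
    ∀ lam : K, P (R ⧸ Ideal.span {t - algebraMap K R lam}) := by
  intro lam
  rcases eq_or_ne lam 0 with rfl | hlam
  · rw [map_zero, sub_zero]; exact hPt
  classical
  set c : R := algebraMap K R lam with hc_def
  set cinv : R := algebraMap K R lam⁻¹ with hcinv_def
  have hccinv : c * cinv = 1 := by
    rw [hc_def, hcinv_def, ← map_mul, mul_inv_cancel₀ hlam, map_one]
  have hc0 : c ∈ 𝒜 0 := by
    rw [h0, Submodule.one_eq_range]; exact ⟨lam, rfl⟩
  have hcinv0 : cinv ∈ 𝒜 0 := by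
    rw [h0, Submodule.one_eq_range]; exact ⟨lam⁻¹, rfl⟩
  set I : Ideal R := Ideal.span {t - c} with hI_def
  let Q := R ⧸ I
  let π : R →+* Q := Ideal.Quotient.mk I
  have hπtc : π t = π c := by
    rw [← sub_eq_zero, ← map_sub]
    exact Ideal.Quotient.eq_zero_iff_mem.mpr (Ideal.subset_span rfl)
  let Loc := Localization.Away t
  let α : R →+* Loc := algebraMap R Loc
  set iv : Loc := IsLocalization.Away.invSelf t with hiv_def
  have hone : α t * iv = 1 := IsLocalization.Away.mul_invSelf t
  -- the map θ₀ : R → R_t,  a_n ↦ a_n (c/t)^n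
  let θ₀ : R →+* Loc := gradedLift 𝒜 α (α c * iv)
  have θ₀_mem : ∀ {n : ℕ} {a : R}, a ∈ 𝒜 n → θ₀ a = α a * (α c * iv) ^ n :=
    fun h => gradedLift_of_mem 𝒜 _ _ h
  have θ₀tc : θ₀ (t - c) = 0 := by
    rw [map_sub, θ₀_mem ht, θ₀_mem hc0, pow_one, pow_zero, mul_one,
      show α t * (α c * iv) = α c * (α t * iv) by ring, hone, mul_one, sub_self]
  let θQ : Q →+* Loc := Ideal.Quotient.lift I θ₀ (by
    intro a haI
    obtain ⟨r, rfl⟩ := Ideal.mem_span_singleton'.mp haI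
    rw [map_mul, θ₀tc, mul_zero])
  have θQπ : ∀ a : R, θQ (π a) = θ₀ a := fun a => Ideal.Quotient.lift_mk I θ₀ _
  -- the map ψ₀ : R → (R/(t-c))[T,T⁻¹],  a_n ↦ ā_n T^n
  let ψ₀ : R →+* LaurentPolynomial Q := gradedLift 𝒜 (LaurentPolynomial.C.comp π) (T 1)
  have ψ₀_mem : ∀ {n : ℕ} {a : R}, a ∈ 𝒜 n →
      ψ₀ a = LaurentPolynomial.C (π a) * (T 1) ^ n :=
    fun h => gradedLift_of_mem 𝒜 _ _ h
  have hc_unit : IsUnit (π c) :=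
    IsUnit.of_mul_eq_one (π cinv) (by rw [← map_mul, hccinv, map_one])
  have hUt : IsUnit (ψ₀ t) := by
    rw [ψ₀_mem ht, pow_one]
    exact (hπtc ▸ hc_unit.map LaurentPolynomial.C).mul (isUnit_T 1)
  let ψ : Loc →+* LaurentPolynomial Q := IsLocalization.Away.lift t hUt
  have ψα : ∀ a : R, ψ (α a) = ψ₀ a := fun a => IsLocalization.Away.lift_eq t hUt a
  -- the inverse χ
  let V : Locˣ := Units.mkOfMulEqOne (α t * α cinv) (α c * iv) (by
    rw [show α t * α cinv * (α c * iv) = α t * iv * (α cinv * α c) by ring, hone, one_mul,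
      ← map_mul, mul_comm cinv c, hccinv, map_one])
  have hVval : (V : Loc) = α t * α cinv := rfl
  let Ghom : Multiplicative ℤ →* Loc := (Units.coeHom Loc).comp (zpowersHom Locˣ V)
  let χ : LaurentPolynomial Q →+* Loc :=
    AddMonoidAlgebra.liftNCRingHom θQ Ghom fun _ _ => Commute.all _ _
  have χC : ∀ b : Q, χ (LaurentPolynomial.C b) = θQ b := by
    intro b
    show AddMonoidAlgebra.liftNC _ _ (AddMonoidAlgebra.single (0 : ℤ) b) = _
    rw [AddMonoidAlgebra.liftNC_single]
    show θQ b * ((V ^ ((Multiplicative.ofAdd (0 : ℤ)).toAdd) : Locˣ) : Loc) = θQ b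
    simp
  have χT : ∀ z : ℤ, χ (T z) = ((V ^ z : Locˣ) : Loc) := by
    intro z
    show AddMonoidAlgebra.liftNC _ _ (AddMonoidAlgebra.single z (1 : Q)) = _
    rw [AddMonoidAlgebra.liftNC_single]
    show θQ 1 * ((V ^ ((Multiplicative.ofAdd z).toAdd) : Locˣ) : Loc) = ((V ^ z : Locˣ) : Loc)
    rw [map_one, one_mul]
    rfl
  have hkey : α c * iv * (α t * α cinv) = 1 := by
    rw [show α c * iv * (α t * α cinv) = α t * iv * (α c * α cinv) by ring, hone, one_mul,
      ← map_mul, hccinv, map_one]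
  -- composite A : χ ∘ ψ = id
  have hA : χ.comp ψ = RingHom.id Loc := by
    refine IsLocalization.ringHom_ext (Submonoid.powers t) ?_
    refine homog_ext 𝒜 _ _ fun n a ha => ?_
    simp only [RingHom.comp_apply, RingHom.id_apply]
    rw [show (algebraMap R Loc) a = α a from rfl, ψα, ψ₀_mem ha, map_mul, map_pow, χC, χT 1,
      zpow_one, hVval, θQπ, θ₀_mem ha, mul_assoc, ← mul_pow, hkey, one_pow, mul_one]
  -- ψ ∘ θ₀ = C ∘ π
  have hψθ : ∀ a : R, ψ (θ₀ a) = LaurentPolynomial.C (π a) := by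
    have : ψ.comp θ₀ = LaurentPolynomial.C.comp π := by
      refine homog_ext 𝒜 _ _ fun n a ha => ?_
      simp only [RingHom.comp_apply]
      have hw : LaurentPolynomial.C (π c) * ψ iv * T 1 = 1 := by
        have h1 := congrArg ψ hone
        rw [map_mul, ψα, ψ₀_mem ht, pow_one, map_one, hπtc] at h1
        rw [show LaurentPolynomial.C (π c) * ψ iv * T 1
            = LaurentPolynomial.C (π c) * T 1 * ψ iv by ring, h1]
      rw [θ₀_mem ha, map_mul, map_pow, map_mul, ψα, ψα, ψ₀_mem hc0, pow_zero, mul_one,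
        ψ₀_mem ha,
        show LaurentPolynomial.C (π a) * T 1 ^ n * (LaurentPolynomial.C (π c) * ψ iv) ^ n
          = LaurentPolynomial.C (π a) * (LaurentPolynomial.C (π c) * ψ iv * T 1) ^ n by
            rw [mul_pow]; ring,
        hw, one_pow, mul_one]
    exact fun a => DFunLike.congr_fun this a
  -- composite B : ψ ∘ χ = id
  have hB : ψ.comp χ = RingHom.id (LaurentPolynomial Q) := by
    refine AddMonoidAlgebra.ringHom_ext (fun b => ?_) (fun z => ?_)
    · obtain ⟨a, rfl⟩ := Ideal.Quotient.mk_surjective (I := I) b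
      simp only [RingHom.comp_apply, RingHom.id_apply]
      rw [show (AddMonoidAlgebra.single (0 : ℤ) (π a) : LaurentPolynomial Q)
          = LaurentPolynomial.C (π a) from rfl, χC, θQπ, hψθ]
    · simp only [RingHom.comp_apply, RingHom.id_apply]
      rw [show (AddMonoidAlgebra.single z (1 : Q) : LaurentPolynomial Q) = T z from rfl, χT]
      -- ψ ↑(V ^ z) = T z
      set W : (LaurentPolynomial Q)ˣ := Units.map (ψ : Loc →* LaurentPolynomial Q) V with hW_def
      have hWcoe : (W : LaurentPolynomial Q) = T 1 := by
        rw [hW_def, Units.coe_map]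
        show ψ (V : Loc) = T 1
        rw [hVval, map_mul, ψα, ψα, ψ₀_mem ht, pow_one, ψ₀_mem hcinv0, pow_zero, mul_one,
          hπtc, show LaurentPolynomial.C (π c) * T 1 * LaurentPolynomial.C (π cinv)
            = LaurentPolynomial.C (π c) * LaurentPolynomial.C (π cinv) * T 1 by ring,
          ← map_mul, ← map_mul, hccinv, map_one, map_one, one_mul]
      have hWinv : (W⁻¹).val = T (-1) := by
        have h1 : (W⁻¹).val * W.val = 1 := by
          rw [← Units.val_mul, inv_mul_cancel, Units.val_one]
        calc (W⁻¹).val = (W⁻¹).val * (W.val * T (-1)) := by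
              rw [hWcoe, ← T_add, add_neg_cancel, T_zero, mul_one]
          _ = T (-1) := by rw [← mul_assoc, h1, one_mul]
      have key : ∀ z : ℤ, ((W ^ z : (LaurentPolynomial Q)ˣ) : LaurentPolynomial Q) = T z := by
        intro z
        induction z using Int.induction_on with
        | zero => simp [T_zero]
        | succ n ih =>
            rw [zpow_add, zpow_one, Units.val_mul, ih, hWcoe, ← T_add]
        | pred n ih =>
            rw [sub_eq_add_neg, zpow_add, Units.val_mul, ih, zpow_neg, zpow_one, hWinv, ← T_add]
      calc ψ ((V ^ z : Locˣ) : Loc)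
          = ((Units.map (ψ : Loc →* LaurentPolynomial Q) (V ^ z) : _ˣ) : LaurentPolynomial Q) :=
            rfl
        _ = ((W ^ z : (LaurentPolynomial Q)ˣ) : LaurentPolynomial Q) := by rw [map_zpow]
        _ = T z := key z
  let e : Loc ≃+* LaurentPolynomial Q := RingEquiv.ofRingHom ψ χ hB hA
  exact hP2 Q (hiso Loc (LaurentPolynomial Q) e (hP1 R 𝒜 h0 t ht hreg hPt))
end

section
/- Let $K$ be a field of characteristic $p > 0$, $S = K[X_1,\ldots,X_n]$, $I \subseteq S$ an ideal, and $<$ a monomial order on $S$. If the initial ideal $\mathrm{in}_<(I^{[p]}:I)$ contains the monomial $X_1^{p-1}\cdots X_n^{p-1}$, then $\mathrm{in}_<(I)$ is a squarefree monomial ideal. -/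
open MvPolynomial

/-- The leading exponent (multidegree) of a polynomial with respect to a monomial order. -/
noncomputable def lexp {n : ℕ} {K : Type} [Field K] (m : MonomialOrder (Fin n))
    (f : MvPolynomial (Fin n) K) : Fin n →₀ ℕ :=
  m.toSyn.symm (f.support.sup fun u => m.toSyn u)

/-- The initial ideal `in_<(I)` of an ideal `I`, generated by the leading monomials of
the nonzero elements of `I`. -/
noncomputable def initialIdeal {n : ℕ} {K : Type} [Field K] (m : MonomialOrder (Fin n))
    (I : Ideal (MvPolynomial (Fin n) K)) : Ideal (MvPolynomial (Fin n) K) :=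
  Ideal.span {g | ∃ f ∈ I, f ≠ 0 ∧ g = monomial (lexp m f) (1 : K)}

/-- The Frobenius power `I^{[p]}`: the ideal generated by `p`-th powers of elements of `I`. -/
def frobPow {R : Type} [CommRing R] (I : Ideal R) (p : ℕ) : Ideal R :=
  Ideal.span ((fun x => x ^ p) '' (I : Set R))

open scoped Classical

set_option linter.unusedSectionVars false

section
variable {n : ℕ} {K : Type} [Field K] (m : MonomialOrder (Fin n))

lemma le_lexp {f : MvPolynomial (Fin n) K} {u : Fin n →₀ ℕ} (hu : u ∈ f.support) :
    m.toSyn u ≤ m.toSyn (lexp m f) := by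
  rw [lexp, AddEquiv.apply_symm_apply]
  exact Finset.le_sup hu

lemma lexp_mem_support {f : MvPolynomial (Fin n) K} (hf : f ≠ 0) :
    lexp m f ∈ f.support := by
  obtain ⟨u, hu, heq⟩ := Finset.exists_mem_eq_sup f.support
    (MvPolynomial.support_nonempty.mpr hf) (fun u => m.toSyn u)
  rw [lexp, heq, AddEquiv.symm_apply_apply]
  exact hu

lemma coeff_lexp_ne_zero {f : MvPolynomial (Fin n) K} (hf : f ≠ 0) :
    coeff (lexp m f) f ≠ 0 :=
  mem_support_iff.mp (lexp_mem_support m hf)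

lemma lexp_eq_of {f : MvPolynomial (Fin n) K} {v : Fin n →₀ ℕ} (hv : v ∈ f.support)
    (hmax : ∀ u ∈ f.support, m.toSyn u ≤ m.toSyn v) : lexp m f = v := by
  have hf : f ≠ 0 := by
    intro h; rw [h] at hv; simp at hv
  exact m.toSyn.injective (le_antisymm (hmax _ (lexp_mem_support m hf)) (le_lexp m hv))
end

section
variable {n : ℕ} {K : Type} [Field K] (m : MonomialOrder (Fin n))


set_option maxHeartbeats 1000000 in
lemma coeff_mul_lexp {f g : MvPolynomial (Fin n) K} (hf : f ≠ 0) (hg : g ≠ 0) :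
    coeff (lexp m f + lexp m g) (f * g) = coeff (lexp m f) f * coeff (lexp m g) g := by
  rw [coeff_mul]
  apply Finset.sum_eq_single_of_mem (lexp m f, lexp m g) (Finset.HasAntidiagonal.mem_antidiagonal.mpr rfl)
  · intro b hb hne
    rw [Finset.HasAntidiagonal.mem_antidiagonal] at hb
    by_cases h1 : coeff b.1 f = 0
    · rw [h1, zero_mul]
    by_cases h2 : coeff b.2 g = 0
    · rw [h2, mul_zero]
    exfalso
    have hb1 : m.toSyn b.1 ≤ m.toSyn (lexp m f) := le_lexp m (mem_support_iff.mpr h1)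
    have hb2 : m.toSyn b.2 ≤ m.toSyn (lexp m g) := le_lexp m (mem_support_iff.mpr h2)
    have hsum : m.toSyn b.1 + m.toSyn b.2 = m.toSyn (lexp m f) + m.toSyn (lexp m g) := by
      rw [← map_add, ← map_add, hb]
    have e1 : m.toSyn b.1 = m.toSyn (lexp m f) := by
      rcases lt_or_eq_of_le hb1 with h | h
      · exact absurd hsum (ne_of_lt (add_lt_add_of_lt_of_le h hb2))
      · exact h
    have e2 : m.toSyn b.2 = m.toSyn (lexp m g) := by
      rw [e1] at hsum
      exact add_left_cancel hsum
    exact hne (Prod.ext (m.toSyn.injective e1) (m.toSyn.injective e2))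

set_option maxHeartbeats 1000000 in
lemma lexp_mul {f g : MvPolynomial (Fin n) K} (hf : f ≠ 0) (hg : g ≠ 0) :
    lexp m (f * g) = lexp m f + lexp m g := by
  apply lexp_eq_of
  · rw [mem_support_iff, coeff_mul_lexp m hf hg]
    exact mul_ne_zero (coeff_lexp_ne_zero m hf) (coeff_lexp_ne_zero m hg)
  · intro u hu
    rw [mem_support_iff, coeff_mul] at hu
    obtain ⟨b, hb, hbne⟩ := Finset.exists_ne_zero_of_sum_ne_zero hu
    rw [Finset.HasAntidiagonal.mem_antidiagonal] at hb
    have h1 : coeff b.1 f ≠ 0 := fun h => hbne (by rw [h, zero_mul])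
    have h2 : coeff b.2 g ≠ 0 := fun h => hbne (by rw [h, mul_zero])
    calc m.toSyn u = m.toSyn b.1 + m.toSyn b.2 := by rw [← map_add, hb]
    _ ≤ _ := by
        rw [map_add]
        exact add_le_add (le_lexp m (mem_support_iff.mpr h1)) (le_lexp m (mem_support_iff.mpr h2))
end

section
variable {n : ℕ} {K : Type} [Field K]

lemma mono_span_dvd {G : Set (Fin n →₀ ℕ)} {v : Fin n →₀ ℕ}
    (hv : monomial v (1 : K) ∈ Ideal.span ((fun u => monomial u (1 : K)) '' G)) :
    ∃ u ∈ G, u ≤ v := by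
  by_contra hcon
  push_neg at hcon
  obtain ⟨c, hsupp, hsum⟩ := Submodule.mem_span_set.mp hv
  have h1 : coeff v (monomial v (1:K)) = 1 := by simp
  rw [← hsum] at h1
  rw [Finsupp.sum] at h1
  rw [coeff_sum] at h1
  have : ∀ i ∈ c.support, coeff v (c i • i) = 0 := by
    intro i hi
    obtain ⟨u, hu, rfl⟩ := hsupp hi
    rw [smul_eq_mul, coeff_mul_monomial']
    rw [if_neg]
    intro hle
    exact hcon u hu hle
  rw [Finset.sum_eq_zero this] at h1
  exact one_ne_zero h1.symm

variable (p : ℕ) [Fact p.Prime] [CharP K p]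

lemma pow_char_eq (s : MvPolynomial (Fin n) K) :
    s ^ p = ∑ w ∈ s.support, monomial (p • w) ((coeff w s) ^ p) := by
  conv_lhs => rw [s.as_sum]
  rw [sum_pow_char]
  exact Finset.sum_congr rfl fun w _ => by rw [monomial_pow]

lemma coeff_pow_char (s : MvPolynomial (Fin n) K) (w : Fin n →₀ ℕ) :
    coeff (p • w) (s ^ p) = (coeff w s) ^ p := by
  have hp : p ≠ 0 := (Fact.out : p.Prime).ne_zero
  rw [pow_char_eq, coeff_sum]
  have : ∀ w' ∈ s.support, coeff (p • w) (monomial (p • w') ((coeff w' s)^p)) =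
      if w' = w then (coeff w' s)^p else 0 := by
    intro w' _
    rw [coeff_monomial]
    congr 1
    simp only [eq_iff_iff]
    constructor
    · intro h
      ext i
      have := DFunLike.congr_fun h i
      simp only [Finsupp.smul_apply, smul_eq_mul] at this
      exact Nat.eq_of_mul_eq_mul_left (Nat.pos_of_ne_zero hp) this
    · intro h; rw [h]
  rw [Finset.sum_congr rfl this, Finset.sum_ite_eq' s.support w (fun w' => (coeff w' s)^p)]
  by_cases hw : w ∈ s.support
  · rw [if_pos hw]
  · rw [if_neg hw, notMem_support_iff.mp hw, zero_pow hp]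

lemma coeff_pow_char_ne (s : MvPolynomial (Fin n) K) (v : Fin n →₀ ℕ)
    (hv : coeff v (s ^ p) ≠ 0) : ∃ w ∈ s.support, v = p • w := by
  rw [pow_char_eq, coeff_sum] at hv
  obtain ⟨w, hw, hne⟩ := Finset.exists_ne_zero_of_sum_ne_zero hv
  refine ⟨w, hw, ?_⟩
  rw [coeff_monomial] at hne
  by_cases h : p • w = v
  · exact h.symm
  · exact absurd (if_neg h) hne
end

section
variable {K : Type} [Field K] (p : ℕ) [Fact p.Prime] [CharP K p]

noncomputable def Kp (K : Type) [Field K] (p : ℕ) [Fact p.Prime] [CharP K p] : Subfield K :=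
  (frobenius K p).fieldRange

noncomputable def Bas (K : Type) [Field K] (p : ℕ) [Fact p.Prime] [CharP K p] :
    Module.Basis (Module.Basis.ofVectorSpaceIndex (Kp K p) K) (Kp K p) K :=
  Module.Basis.ofVectorSpace (Kp K p) K

noncomputable def root (c : Kp K p) : K :=
  Classical.choose (RingHom.mem_fieldRange.mp c.2)

lemma root_spec (c : Kp K p) : (root p c) ^ p = (c : K) := by
  have := Classical.choose_spec (RingHom.mem_fieldRange.mp c.2)
  rw [← this, frobenius_def]
  rfl

variable {n : ℕ}
set_option maxHeartbeats 1000000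

lemma exists_decomp (x : MvPolynomial (Fin n) K) :
    ∃ (D : Finset ((Fin n →₀ ℕ) × (Module.Basis.ofVectorSpaceIndex (Kp K p) K)))
      (t : (Fin n →₀ ℕ) × (Module.Basis.ofVectorSpaceIndex (Kp K p) K) → MvPolynomial (Fin n) K),
      (∀ b ∈ D, ∀ i, b.1 i < p) ∧
      x = ∑ b ∈ D, ((Bas K p b.2 : K)) • (monomial b.1 (1:K) * (t b) ^ p) := by
  have hp : 0 < p := (Fact.out : p.Prime).pos
  induction x using MvPolynomial.induction_on' with
  | monomial u a =>
    set r : Fin n →₀ ℕ := Finsupp.equivFunOnFinite.symm fun i => u i % p with hrdef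
    set q : Fin n →₀ ℕ := Finsupp.equivFunOnFinite.symm fun i => u i / p with hqdef
    have hu : r + p • q = u := by
      ext i
      simp only [Finsupp.coe_add, Pi.add_apply, Finsupp.coe_smul, Pi.smul_apply, smul_eq_mul,
        hrdef, hqdef, Finsupp.coe_equivFunOnFinite_symm]
      exact Nat.mod_add_div _ _
    refine ⟨((Bas K p).repr a).support.image fun l => (r, l),
      fun b => monomial q (root p ((Bas K p).repr a b.2)), ?_, ?_⟩
    · intro b hb i
      obtain ⟨l, _, rfl⟩ := Finset.mem_image.mp hb
      simp only [hrdef, Finsupp.coe_equivFunOnFinite_symm]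
      exact Nat.mod_lt _ hp
    · rw [Finset.sum_image (by intro a1 _ a2 _ h; exact (Prod.ext_iff.mp h).2)]
      have : ∀ l ∈ ((Bas K p).repr a).support,
          ((Bas K p) l : K) • (monomial r (1:K) * (monomial q (root p ((Bas K p).repr a l))) ^ p) =
          monomial u ((((Bas K p).repr a l : K)) * ((Bas K p) l : K)) := by
        intro l _
        rw [monomial_pow, monomial_mul, one_mul, hu, smul_monomial,
          root_spec, smul_eq_mul, mul_comm]
      rw [Finset.sum_congr rfl this, ← map_sum (monomial u)]
      congr 1
      conv_lhs => rw [← Module.Basis.linearCombination_repr (Bas K p) a]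
      rw [Finsupp.linearCombination_apply, Finsupp.sum]
      refine Finset.sum_congr rfl fun l _ => ?_
      rw [Algebra.smul_def]
      rfl
  | add f g hf hg =>
    obtain ⟨D1, t1, hD1, rfl⟩ := hf
    obtain ⟨D2, t2, hD2, rfl⟩ := hg
    refine ⟨D1 ∪ D2, fun b => (if b ∈ D1 then t1 b else 0) + (if b ∈ D2 then t2 b else 0),
      ?_, ?_⟩
    · intro b hb i
      rcases Finset.mem_union.mp hb with h | h
      exacts [hD1 b h i, hD2 b h i]
    · have expand : ∀ b ∈ D1 ∪ D2,
          ((Bas K p b.2 : K)) • (monomial b.1 (1:K) *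
            ((if b ∈ D1 then t1 b else 0) + (if b ∈ D2 then t2 b else 0)) ^ p) =
          (if b ∈ D1 then ((Bas K p b.2 : K)) • (monomial b.1 (1:K) * (t1 b) ^ p) else 0) +
          (if b ∈ D2 then ((Bas K p b.2 : K)) • (monomial b.1 (1:K) * (t2 b) ^ p) else 0) := by
        intro b _
        rw [add_pow_char, mul_add, smul_add]
        congr 1
        · by_cases h : b ∈ D1 <;> simp [h, zero_pow hp.ne']
        · by_cases h : b ∈ D2 <;> simp [h, zero_pow hp.ne']
      rw [Finset.sum_congr rfl expand, Finset.sum_add_distrib]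
      congr 1
      · rw [Finset.sum_ite_mem, Finset.union_inter_cancel_left]
      · rw [Finset.sum_ite_mem, Finset.union_inter_cancel_right]
end

section
variable {n : ℕ} {K : Type} [Field K] {p : ℕ}

lemma frob_rep {I : Ideal (MvPolynomial (Fin n) K)} {h : MvPolynomial (Fin n) K}
    (hh : h ∈ frobPow I p) :
    ∃ c : MvPolynomial (Fin n) K →₀ MvPolynomial (Fin n) K,
      (∀ f ∈ c.support, f ∈ I) ∧ h = c.sum fun f x => f ^ p * x := by
  refine Submodule.span_induction ?_ ?_ ?_ ?_ hh
  · rintro y ⟨f, hf, rfl⟩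
    refine ⟨Finsupp.single f 1, ?_, ?_⟩
    · intro g hg
      rw [Finsupp.mem_support_iff] at hg
      by_cases hgf : g = f
      · rwa [hgf]
      · classical
        rw [Finsupp.single_apply, if_neg (Ne.symm hgf)] at hg
        exact absurd rfl hg
    · rw [Finsupp.sum_single_index (by rw [mul_zero])]
      rw [mul_one]
  · exact ⟨0, by simp, by simp⟩
  · rintro x y - - ⟨c, hc, rfl⟩ ⟨c', hc', rfl⟩
    refine ⟨c + c', ?_, ?_⟩
    · intro f hf
      rcases Finset.mem_union.mp (Finsupp.support_add hf) with h | h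
      exacts [hc f h, hc' f h]
    · rw [Finsupp.sum_add_index (fun f _ => by rw [mul_zero]) (fun f _ x y => by rw [mul_add])]
  · rintro g x - ⟨c, hc, rfl⟩
    refine ⟨g • c, ?_, ?_⟩
    · intro f hf
      exact hc f (Finsupp.support_smul hf)
    · rw [smul_eq_mul, Finsupp.mul_sum]
      rw [Finsupp.sum_smul_index (fun f => by rw [mul_zero])]
      exact Finsupp.sum_congr fun f _ => by ring
end

section
variable {n : ℕ} {K : Type} [Field K] {p : ℕ} [Fact p.Prime] [CharP K p]
variable (m : MonomialOrder (Fin n))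


lemma modp_unique {a a' w w' : Fin n →₀ ℕ} (hp : 0 < p) (ha : ∀ i, a i < p)
    (ha' : ∀ i, a' i < p) (heq : a + p • w = a' + p • w') : a = a' ∧ w = w' := by
  have key : ∀ i, a i = a' i ∧ w i = w' i := by
    intro i
    have h := DFunLike.congr_fun heq i
    simp only [Finsupp.coe_add, Pi.add_apply, Finsupp.coe_smul, Pi.smul_apply, smul_eq_mul] at h
    have h1 : a i = a' i := by
      have e1 : a i % p = a' i % p := by
        have : (a i + p * w i) % p = (a' i + p * w' i) % p := by rw [h]
        rwa [Nat.add_mul_mod_self_left, Nat.add_mul_mod_self_left] at this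
      rwa [Nat.mod_eq_of_lt (ha i), Nat.mod_eq_of_lt (ha' i)] at e1
    refine ⟨h1, ?_⟩
    rw [h1] at h
    have := Nat.add_left_cancel h
    exact Nat.eq_of_mul_eq_mul_left hp this
  exact ⟨Finsupp.ext fun i => (key i).1, Finsupp.ext fun i => (key i).2⟩

lemma nsmul_le_cancel {x y : m.syn} (hp : 0 < p) (h : p • x ≤ p • y) : x ≤ y := by
  by_contra hc
  push_neg at hc
  exact absurd h (not_le.mpr (nsmul_lt_nsmul_right hp.ne' hc))

set_option maxHeartbeats 2000000 in
lemma max_lemma (D : Finset ((Fin n →₀ ℕ) × (Module.Basis.ofVectorSpaceIndex (Kp K p) K)))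
    (t : (Fin n →₀ ℕ) × (Module.Basis.ofVectorSpaceIndex (Kp K p) K) → MvPolynomial (Fin n) K)
    (hD : ∀ b ∈ D, ∀ i, b.1 i < p)
    (hne : (∑ b ∈ D, ((Bas K p b.2 : K)) • (monomial b.1 (1:K) * (t b) ^ p)) ≠ 0) :
    ∃ b ∈ D, t b ≠ 0 ∧
      lexp m (∑ b ∈ D, ((Bas K p b.2 : K)) • (monomial b.1 (1:K) * (t b) ^ p))
        = b.1 + p • lexp m (t b) := by
  have hp : 0 < p := (Fact.out : p.Prime).pos
  set h := ∑ b ∈ D, ((Bas K p b.2 : K)) • (monomial b.1 (1:K) * (t b) ^ p) with hdef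
  set D' := D.filter (fun b => t b ≠ 0) with hD'def
  have hsum : h = ∑ b ∈ D', ((Bas K p b.2 : K)) • (monomial b.1 (1:K) * (t b) ^ p) := by
    rw [hdef]
    refine (Finset.sum_subset (Finset.filter_subset _ _) ?_).symm
    intro b hb hnb
    have : t b = 0 := by
      by_contra hc
      exact hnb (Finset.mem_filter.mpr ⟨hb, hc⟩)
    rw [this, zero_pow hp.ne', mul_zero, smul_zero]
  have hD'ne : D'.Nonempty := by
    rw [Finset.nonempty_iff_ne_empty]
    intro hemp
    rw [hsum, hemp, Finset.sum_empty] at hne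
    exact hne rfl
  obtain ⟨bs, hbs, hmax⟩ := D'.exists_max_image
    (fun b => m.toSyn (b.1 + p • lexp m (t b))) hD'ne
  have hbsD : bs ∈ D := (Finset.mem_filter.mp hbs).1
  have htbs : t bs ≠ 0 := (Finset.mem_filter.mp hbs).2
  set ws := lexp m (t bs) with hwsdef
  set vs := bs.1 + p • ws with hvsdef
  -- upper bound on support of h
  have claim1 : ∀ u ∈ h.support, m.toSyn u ≤ m.toSyn vs := by
    intro u hu
    rw [mem_support_iff, hsum, coeff_sum] at hu
    obtain ⟨b, hb, hbne⟩ := Finset.exists_ne_zero_of_sum_ne_zero hu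
    rw [coeff_smul, smul_eq_mul] at hbne
    have h2 : coeff u (monomial b.1 (1:K) * (t b) ^ p) ≠ 0 := fun hz => hbne (by rw [hz, mul_zero])
    rw [coeff_monomial_mul'] at h2
    by_cases hle : b.1 ≤ u
    · rw [if_pos hle, one_mul] at h2
      obtain ⟨w, hw, hweq⟩ := coeff_pow_char_ne p (t b) _ h2
      have hu_eq : u = b.1 + p • w := by
        rw [← hweq, add_tsub_cancel_of_le hle]
      calc m.toSyn u = m.toSyn b.1 + p • m.toSyn w := by
            rw [hu_eq, map_add, map_nsmul]
        _ ≤ m.toSyn b.1 + p • m.toSyn (lexp m (t b)) := by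
            exact add_le_add_right (nsmul_le_nsmul_right (le_lexp m hw) p) _
        _ = m.toSyn (b.1 + p • lexp m (t b)) := by rw [map_add, map_nsmul]
        _ ≤ m.toSyn vs := hmax b hb
    · rw [if_neg hle] at h2
      exact absurd rfl h2
  -- each term's coefficient at vs
  have term_coeff : ∀ b ∈ D', coeff vs (((Bas K p b.2 : K)) • (monomial b.1 (1:K) * (t b) ^ p))
      = if b.1 = bs.1 then (Bas K p b.2 : K) * (coeff ws (t b)) ^ p else 0 := by
    intro b hb
    rw [coeff_smul, smul_eq_mul, coeff_monomial_mul']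
    by_cases hbb : b.1 = bs.1
    · rw [if_pos hbb, if_pos (by rw [hbb, hvsdef]; exact le_self_add), one_mul]
      congr 1
      have : vs - b.1 = p • ws := by rw [hbb, hvsdef, add_tsub_cancel_left]
      rw [this, coeff_pow_char]
    · rw [if_neg hbb]
      by_cases hle : b.1 ≤ vs
      · rw [if_pos hle, one_mul]
        by_cases hz : coeff (vs - b.1) (t b ^ p) = 0
        · rw [hz, mul_zero]
        exfalso
        obtain ⟨w, hw, hweq⟩ := coeff_pow_char_ne p (t b) _ hz
        have hveq : b.1 + p • w = bs.1 + p • ws := by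
          rw [← hweq, add_tsub_cancel_of_le hle, hvsdef]
        exact hbb (modp_unique hp (hD b (Finset.filter_subset _ _ hb))
          (hD bs hbsD) hveq).1
      · rw [if_neg hle, mul_zero]
  -- the coefficient at vs is nonzero
  have claim2 : coeff vs h ≠ 0 := by
    intro hzero
    rw [hsum, coeff_sum, Finset.sum_congr rfl term_coeff, ← Finset.sum_filter] at hzero
    set Df := D'.filter (fun b => b.1 = bs.1) with hDfdef
    have hinj : ∀ b1 ∈ Df, ∀ b2 ∈ Df, b1.2 = b2.2 → b1 = b2 := by
      intro b1 hb1 b2 hb2 hsnd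
      have e1 : b1.1 = bs.1 := (Finset.mem_filter.mp hb1).2
      have e2 : b2.1 = bs.1 := (Finset.mem_filter.mp hb2).2
      exact Prod.ext (e1.trans e2.symm) hsnd
    have hre : (∑ l ∈ Df.image Prod.snd,
        (Bas K p l : K) * (coeff ws (t (bs.1, l))) ^ p) = 0 := by
      rw [Finset.sum_image hinj]
      rw [← hzero]
      refine Finset.sum_congr rfl fun b hb => ?_
      have e1 : b.1 = bs.1 := (Finset.mem_filter.mp hb).2
      have : (bs.1, b.2) = b := by rw [← e1]
      rw [this]
    have hli := linearIndependent_iff'.mp (Bas K p).linearIndependent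
      (Df.image Prod.snd)
      (fun l => (⟨(coeff ws (t (bs.1, l))) ^ p, ⟨coeff ws (t (bs.1, l)), rfl⟩⟩ : Kp K p))
      ?_ bs.2 ?_
    · have : (coeff ws (t (bs.1, bs.2))) ^ p = 0 := congrArg Subtype.val hli
      rw [Prod.mk.eta] at this
      have := pow_eq_zero_iff hp.ne' |>.mp this
      exact coeff_lexp_ne_zero m htbs this
    · rw [← hre]
      refine Finset.sum_congr rfl fun l _ => ?_
      rw [Algebra.smul_def, mul_comm]
      rfl
    · refine Finset.mem_image.mpr ⟨bs, ?_, rfl⟩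
      exact Finset.mem_filter.mpr ⟨hbs, rfl⟩
  refine ⟨bs, hbsD, htbs, ?_⟩
  exact lexp_eq_of m (mem_support_iff.mpr claim2) claim1
end

section
variable {n : ℕ} {K : Type} [Field K] {p : ℕ} [Fact p.Prime] [CharP K p]




lemma key_lemma (m : MonomialOrder (Fin n)) {I : Ideal (MvPolynomial (Fin n) K)}
    {h : MvPolynomial (Fin n) K} (hh : h ∈ frobPow I p) (hne : h ≠ 0) :
    ∃ a g, (∀ i, a i < p) ∧ g ∈ I ∧ g ≠ 0 ∧ lexp m h = a + p • lexp m g := by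
  have hp : 0 < p := (Fact.out : p.Prime).pos
  obtain ⟨c, hcmem, hcrep⟩ := frob_rep hh
  choose Df tf hDf hrep using fun f => exists_decomp p (c f)
  set D : Finset ((Fin n →₀ ℕ) × (Module.Basis.ofVectorSpaceIndex (Kp K p) K)) :=
    c.support.biUnion (fun f => Df f) with hDdef
  set T : (Fin n →₀ ℕ) × (Module.Basis.ofVectorSpaceIndex (Kp K p) K) → MvPolynomial (Fin n) K :=
    fun b => ∑ f ∈ c.support, f * (if b ∈ Df f then tf f b else 0) with hTdef
  have hh_eq : h = ∑ b ∈ D, ((Bas K p b.2 : K)) • (monomial b.1 (1:K) * (T b) ^ p) := by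
    rw [hcrep, Finsupp.sum]
    have step1 : ∀ f ∈ c.support, f ^ p * c f =
        ∑ b ∈ D, ((Bas K p b.2 : K)) • (monomial b.1 (1:K) * (f * (if b ∈ Df f then tf f b else 0)) ^ p) := by
      intro f hf
      conv_lhs => rw [hrep f]
      rw [Finset.mul_sum]
      rw [← Finset.sum_subset (Finset.subset_biUnion_of_mem Df hf :
        Df f ⊆ D) (by
          intro b _ hnb
          rw [if_neg hnb, mul_zero, zero_pow hp.ne', mul_zero, smul_zero])]
      refine Finset.sum_congr rfl fun b hb => ?_
      rw [if_pos hb, mul_pow, mul_smul_comm]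
      ring_nf
    rw [Finset.sum_congr rfl step1, Finset.sum_comm]
    refine Finset.sum_congr rfl fun b _ => ?_
    rw [← Finset.smul_sum, ← Finset.mul_sum, ← sum_pow_char]
  have hDlt : ∀ b ∈ D, ∀ i, b.1 i < p := by
    intro b hb i
    obtain ⟨f, hf, hbf⟩ := Finset.mem_biUnion.mp hb
    exact hDf f b hbf i
  rw [hh_eq] at hne
  obtain ⟨b, hbD, hTb, heq⟩ := max_lemma m D T hDlt hne
  refine ⟨b.1, T b, hDlt b hbD, ?_, hTb, by rw [hh_eq]; exact heq⟩
  rw [hTdef]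
  refine Ideal.sum_mem I fun f hf => Ideal.mul_mem_right _ _ (hcmem f hf)
end

section
variable {n : ℕ} {K : Type} [Field K] {p : ℕ} [Fact p.Prime] [CharP K p]




lemma initialIdeal_eq_span (m : MonomialOrder (Fin n)) (J : Ideal (MvPolynomial (Fin n) K)) :
    initialIdeal m J =
      Ideal.span ((fun u => monomial u (1 : K)) '' {u | ∃ f ∈ J, f ≠ 0 ∧ lexp m f = u}) := by
  unfold initialIdeal
  congr 1
  ext g
  constructor
  · rintro ⟨f, hf, hf0, rfl⟩
    exact ⟨lexp m f, ⟨f, hf, hf0, rfl⟩, rfl⟩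
  · rintro ⟨u, ⟨f, hf, hf0, rfl⟩, rfl⟩
    exact ⟨f, hf, hf0, rfl⟩

lemma descent (m : MonomialOrder (Fin n)) {I : Ideal (MvPolynomial (Fin n) K)}
    {c : MvPolynomial (Fin n) K} (hcol : c ∈ Submodule.colon (frobPow I p) I) (hc0 : c ≠ 0)
    (hvC : ∀ i, lexp m c i ≤ p - 1) :
    ∀ N : ℕ, ∀ f ∈ I, f ≠ 0 → (∑ i, lexp m f i) < N →
    ∃ w, (∀ i, w i ≤ 1) ∧ (∀ i, w i ≤ lexp m f i) ∧ ∃ g ∈ I, g ≠ 0 ∧ lexp m g = w := by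
  have hp : 0 < p := (Fact.out : p.Prime).pos
  have hp2 : 2 ≤ p := (Fact.out : p.Prime).two_le
  intro N
  induction N with
  | zero => intro f _ _ habs; omega
  | succ N ih =>
    intro f hfI hf0 hdeg
    by_cases hsq : ∀ i, lexp m f i ≤ 1
    · exact ⟨lexp m f, hsq, fun i => le_rfl, f, hfI, hf0, rfl⟩
    · push_neg at hsq
      obtain ⟨i0, hi0⟩ := hsq
      have hcf : c * f ∈ frobPow I p := by
        have := Submodule.mem_colon.mp hcol f hfI
        rwa [smul_eq_mul] at this
      have hcf0 : c * f ≠ 0 := mul_ne_zero hc0 hf0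
      obtain ⟨a, g, hap, hgI, hg0, heq⟩ := key_lemma m hcf hcf0
      rw [lexp_mul m hc0 hf0] at heq
      have coord : ∀ i, lexp m c i + lexp m f i = a i + p * lexp m g i := by
        intro i
        have := DFunLike.congr_fun heq i
        simpa [Finsupp.coe_add, Pi.add_apply, Finsupp.coe_smul, Pi.smul_apply,
          smul_eq_mul] using this
      have hle : ∀ i, lexp m g i ≤ lexp m f i := by
        intro i
        have e := coord i
        have h1 := hvC i
        have h2 := hap i
        by_contra hcon
        push_neg at hcon
        have h3 : p * (lexp m f i + 1) ≤ p * lexp m g i := Nat.mul_le_mul_left p hcon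
        have h4 : p * (lexp m f i + 1) = p * lexp m f i + p := by ring
        have hpf : lexp m f i ≤ p * lexp m f i := Nat.le_mul_of_pos_left _ hp
        omega
      have hlt : lexp m g i0 < lexp m f i0 := by
        have e := coord i0
        have h1 := hvC i0
        have h2 := hap i0
        by_contra hcon
        push_neg at hcon
        have h3 : p * lexp m f i0 ≤ p * lexp m g i0 := Nat.mul_le_mul_left p hcon
        have h5 : p * lexp m f i0 = lexp m f i0 + (p - 1) * lexp m f i0 := by
          obtain ⟨q, rfl⟩ : ∃ q, p = q + 1 := ⟨p - 1, by omega⟩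
          simp only [Nat.add_sub_cancel]
          ring
        have h6 : (p - 1) * 2 ≤ (p - 1) * lexp m f i0 := Nat.mul_le_mul_left (p - 1) hi0
        omega
      have hdeg' : (∑ i, lexp m g i) < N := by
        have hlt2 : (∑ i, lexp m g i) < ∑ i, lexp m f i :=
          Finset.sum_lt_sum (fun i _ => hle i) ⟨i0, Finset.mem_univ i0, hlt⟩
        omega
      obtain ⟨w, hw1, hw2, hrest⟩ := ih g hgI hg0 hdeg'
      exact ⟨w, hw1, fun i => le_trans (hw2 i) (hle i), hrest⟩
end

/-- Let `S = K[X_1,…,X_n]` over a field `K` of characteristic `p > 0`,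
`I ⊆ S` an ideal and `<` a monomial order. If `in_<(I^{[p]} : I)` contains the monomial
`X_1^{p-1} ⋯ X_n^{p-1}`, then `in_<(I)` is a squarefree monomial ideal. -/
theorem stmt17 (n p : ℕ) [Fact p.Prime] (K : Type) [Field K] [CharP K p]
    (m : MonomialOrder (Fin n)) (I : Ideal (MvPolynomial (Fin n) K))
    (h : monomial (Finsupp.equivFunOnFinite.symm fun _ => p - 1) (1 : K) ∈
      initialIdeal m (Submodule.colon (frobPow I p) I)) :
    IsSqFreeMonomialIdeal n K (initialIdeal m I) := by
  rw [initialIdeal_eq_span] at h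
  obtain ⟨u0, hu0mem, hu0le⟩ := mono_span_dvd h
  obtain ⟨c, hcol, hc0, hlc⟩ := hu0mem
  have hvC : ∀ i, lexp m c i ≤ p - 1 := by
    intro i
    have := hu0le i
    rw [← hlc] at this
    simpa using this
  refine ⟨{w | (∀ i, w i ≤ 1) ∧ monomial w (1:K) ∈ initialIdeal m I}, fun u hu => hu.1, ?_⟩
  apply le_antisymm
  · rw [initialIdeal]
    rw [Ideal.span_le]
    rintro x ⟨f, hfI, hf0, rfl⟩
    obtain ⟨w, hw1, hw2, g, hgI, hg0, hlg⟩ := descent m hcol hc0 hvC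
      ((∑ i, lexp m f i) + 1) f hfI hf0 (by omega)
    have hwG : w ∈ {w | (∀ i, w i ≤ 1) ∧ monomial w (1:K) ∈ initialIdeal m I} := by
      refine ⟨hw1, ?_⟩
      apply Ideal.subset_span
      exact ⟨g, hgI, hg0, by rw [hlg]⟩
    have hle : w ≤ lexp m f := Finsupp.le_def.mpr hw2
    have : monomial (lexp m f) (1:K) = monomial (lexp m f - w) (1:K) * monomial w (1:K) := by
      rw [monomial_mul, one_mul, tsub_add_cancel_of_le hle]
    rw [this]
    exact Ideal.mul_mem_left _ _ (Ideal.subset_span ⟨w, hwG, rfl⟩)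
  · rw [Ideal.span_le]
    rintro x ⟨w, hwG, rfl⟩
    exact hwG.2
end
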